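/- Let K be a compact Hausdorff space and suppose ℓ₁ embeds almost isometrically into C(K), i.e., for every ε > 0 there exists a map f : ℓ₁ → C(K) with ‖x − y‖₁/(1+ε) ≤ ‖f(x) − f(y)‖_∞ ≤ ‖x − y‖₁ for all x, y ∈ ℓ₁. Then for every n ∈ ℕ, ℓ₁ embeds almost isometrically into C(K^(n)), where K^(n) is the n-th iterated derived set of K with the subspace topology. -/

import Mathlib

/-- The `n`-th iterated derived set of a topological space `K`, taken inside `K`:
`K^(0) = K` and `K^(n+1)` is the set of accumulation points of `K^(n)` in `K`. -/
def iteratedDerivedSet (K : Type*) [TopologicalSpace K] : ℕ → Set K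
  | 0 => Set.univ
  | n + 1 => derivedSet (iteratedDerivedSet K n)

lemma isClosed_iteratedDerivedSet (K : Type*) [TopologicalSpace K] [T1Space K] (n : ℕ) :
    IsClosed (iteratedDerivedSet K n) := by
  cases n with
  | zero => exact isClosed_univ
  | succ n => exact isClosed_derivedSet _

/-- Each iterated derived set of a compact space is a compact subspace. -/
noncomputable instance iteratedDerivedSetCompact (K : Type*) [TopologicalSpace K]
    [T1Space K] [CompactSpace K] (n : ℕ) : CompactSpace (iteratedDerivedSet K n) :=
  isCompact_iff_compactSpace.mp ((isClosed_iteratedDerivedSet K n).isCompact)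

open Filter Set

local notation "ℓ1" => lp (fun _ : ℕ => ℝ) 1

lemma l1_summable (w : ℓ1) : Summable (fun i => |(w : ℕ → ℝ) i|) := by
  have := (lp.memℓp w).summable (p := 1) (by norm_num)
  simpa [Real.norm_eq_abs] using this

lemma l1_norm_eq (w : ℓ1) : ‖w‖ = ∑' i, |(w : ℕ → ℝ) i| := by
  rw [lp.norm_eq_tsum_rpow (by norm_num) w]
  simp [Real.norm_eq_abs]

/-- splitting the ℓ¹ norm at two coordinates -/
lemma l1_norm_split {w z : ℓ1} {a b : ℕ} (hab : a ≠ b)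
    (hc : ∀ i, i ≠ a → i ≠ b → (w : ℕ → ℝ) i = (z : ℕ → ℝ) i) :
    ‖w‖ = (‖z‖ - |(z : ℕ → ℝ) a| - |(z : ℕ → ℝ) b|)
      + (|(w : ℕ → ℝ) a| + |(w : ℕ → ℝ) b|) := by
  have hws := l1_summable w
  have hzs := l1_summable z
  have hw1 : Summable (fun i => if i = a then 0 else |(w : ℕ → ℝ) i|) :=
    Summable.of_nonneg_of_le (fun i => by positivity)
      (fun i => by split <;> simp [abs_nonneg]) hws
  have hz1 : Summable (fun i => if i = a then 0 else |(z : ℕ → ℝ) i|) :=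
    Summable.of_nonneg_of_le (fun i => by positivity)
      (fun i => by split <;> simp [abs_nonneg]) hzs
  have ew := hws.tsum_eq_add_tsum_ite a
  have ew2 := hw1.tsum_eq_add_tsum_ite b
  have ez := hzs.tsum_eq_add_tsum_ite a
  have ez2 := hz1.tsum_eq_add_tsum_ite b
  have heq : (fun i => if i = b then 0 else if i = a then 0 else |(w : ℕ → ℝ) i|)
      = (fun i => if i = b then 0 else if i = a then 0 else |(z : ℕ → ℝ) i|) := by
    funext i
    by_cases h1 : i = b
    · simp [h1]
    · by_cases h2 : i = a
      · simp [h1, h2]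
      · simp [h1, h2, hc i h2 h1]
  rw [l1_norm_eq w, l1_norm_eq z, ew, ew2, ez, ez2, heq]
  have hba : ¬ (b = a) := fun h => hab h.symm
  simp only [hba, if_false]
  ring

lemma single_coord (i j : ℕ) (s : ℝ) :
    ((lp.single 1 i s : ℓ1) : ℕ → ℝ) j = if j = i then s else 0 := by
  by_cases h : j = i
  · subst h; simp [lp.single_apply_self]
  · simp [h, lp.single_apply_ne 1 i _ h]

lemma norm_single' (i : ℕ) (s : ℝ) : ‖(lp.single 1 i s : ℓ1)‖ = |s| := by
  have := lp.norm_single (p := 1) (E := fun _ : ℕ => ℝ) (by norm_num) i s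
  simpa [Real.norm_eq_abs] using this

lemma norm_single_sub_single {a b : ℕ} (hab : a ≠ b) (s t : ℝ) :
    ‖(lp.single 1 a s - lp.single 1 b t : ℓ1)‖ = |s| + |t| := by
  have h := l1_norm_split (w := (lp.single 1 a s - lp.single 1 b t : ℓ1)) (z := 0) hab
    (by
      intro i hia hib
      simp [lp.coeFn_sub, single_coord, hia, hib])
  have ha : ((lp.single 1 a s - lp.single 1 b t : ℓ1) : ℕ → ℝ) a = s := by
    simp [lp.coeFn_sub, single_coord, hab]
  have hb : ((lp.single 1 a s - lp.single 1 b t : ℓ1) : ℕ → ℝ) b = -t := by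
    have hba : b ≠ a := fun h => hab h.symm
    simp [lp.coeFn_sub, single_coord, hba]
  rw [h, ha, hb]
  simp

/-- If a 1-Lipschitz function `φ` separates the perturbed pair `(x + p, y - p)` almost
optimally, where `p = (d/2)·(e_a - e_b)`, then it separates `(x,y)` almost optimally and
is steep in the `-e_b` direction at `x` and in the `+e_a` direction "below" `y`. -/
lemma chains {x y : ℓ1} {d ε : ℝ} (hd : ‖x - y‖ = d) (hd0 : 0 < d)
    {a b : ℕ} (hab : a ≠ b)
    (φ : ℓ1 → ℝ) (hφ : ∀ w w' : ℓ1, φ w - φ w' ≤ ‖w - w'‖)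
    (hw : 3*d - 8*(d*ε) ≤ φ (x + (lp.single 1 a (d/2) - lp.single 1 b (d/2)))
        - φ (y - (lp.single 1 a (d/2) - lp.single 1 b (d/2)))) :
    (d - 8*(d*ε) ≤ φ x - φ y)
    ∧ (d/2 - 8*(d*ε) ≤ φ (x - lp.single 1 b (d/2)) - φ x)
    ∧ (d/2 - 8*(d*ε) ≤ φ y - φ (y - lp.single 1 a (d/2))) := by
  have npa : ‖(lp.single 1 a (d/2) : ℓ1)‖ = d/2 := by
    rw [norm_single']; exact abs_of_pos (by linarith)
  have npb : ‖(lp.single 1 b (d/2) : ℓ1)‖ = d/2 := by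
    rw [norm_single']; exact abs_of_pos (by linarith)
  have np : ‖(lp.single 1 a (d/2) - lp.single 1 b (d/2) : ℓ1)‖ = d := by
    rw [norm_single_sub_single hab, abs_of_pos (by linarith : (0:ℝ) < d/2)]; ring
  set pa := (lp.single 1 a (d/2) : ℓ1)
  set pb := (lp.single 1 b (d/2) : ℓ1)
  set p := pa - pb with hp
  set u := x + p with hu
  set v := y - p with hv
  have l1 : φ u - φ (x - pb) ≤ d/2 := by
    have h := hφ u (x - pb)
    rwa [show u - (x - pb) = pa by rw [hu, hp]; abel, npa] at h
  have l2 : φ (x - pb) - φ x ≤ d/2 := by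
    have h := hφ (x - pb) x
    rwa [show (x - pb) - x = -pb by abel, norm_neg, npb] at h
  have l3 : φ x - φ y ≤ d := by
    have h := hφ x y; rwa [hd] at h
  have l4 : φ y - φ v ≤ d := by
    have h := hφ y v
    rwa [show y - v = p by rw [hv]; abel, np] at h
  have l5 : φ u - φ x ≤ d := by
    have h := hφ u x
    rwa [show u - x = p by rw [hu]; abel, np] at h
  have l6 : φ y - φ (y - pa) ≤ d/2 := by
    have h := hφ y (y - pa)
    rwa [show y - (y - pa) = pa by abel, npa] at h
  have l7 : φ (y - pa) - φ v ≤ d/2 := by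
    have h := hφ (y - pa) v
    rwa [show (y - pa) - v = -pb by rw [hv, hp]; abel, norm_neg, npb] at h
  refine ⟨by linarith, by linarith, by linarith⟩

set_option maxHeartbeats 2000000 in
/-- Key step: an almost isometric embedding of ℓ¹ into C(A) restricts to an almost
isometric embedding into C(A'), with slightly worse constant. -/
lemma step_derived {K : Type*} [TopologicalSpace K] [CompactSpace K] [T1Space K]
    {A : Set K} [CompactSpace ↥A] [CompactSpace ↥(derivedSet A)]
    (hA : IsClosed A) {ε δ : ℝ} (hδ : 0 < δ)
    (hε : ε = min (δ/(9*(1+δ))) (1/25))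
    (f : ℓ1 → C(↥A, ℝ))
    (hf : ∀ x y : ℓ1, ‖x - y‖/(1+ε) ≤ ‖f x - f y‖ ∧ ‖f x - f y‖ ≤ ‖x - y‖) :
    ∃ g : ℓ1 → C(↥(derivedSet A), ℝ), ∀ x y : ℓ1,
      ‖x - y‖/(1+δ) ≤ ‖g x - g y‖ ∧ ‖g x - g y‖ ≤ ‖x - y‖ := by
  classical
  have honeδ : (0:ℝ) < 1 + δ := by linarith
  have hε0 : 0 < ε := by
    rw [hε]; exact lt_min (by positivity) (by norm_num)
  have hε25 : ε ≤ 1/25 := by rw [hε]; exact min_le_right _ _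
  have honeε : (0:ℝ) < 1 + ε := by linarith
  have hkey : 8*ε*(1+δ) ≤ δ := by
    rcases le_total (δ/(9*(1+δ))) (1/25) with hm | hm
    · rw [hε, min_eq_left hm]
      have he : 8*(δ/(9*(1+δ)))*(1+δ) = (8/9)*δ := by
        field_simp
      rw [he]; linarith
    · rw [hε, min_eq_right hm]
      rw [div_le_div_iff₀ (by norm_num) (by linarith : (0:ℝ) < 9*(1+δ))] at hm
      linarith
  have hsub : derivedSet A ⊆ A :=
    (derivedSet_subset_closure A).trans hA.closure_eq.subset
  set ι : C(↥(derivedSet A), ↥A) :=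
    ⟨fun k => ⟨k.1, hsub k.2⟩, Continuous.subtype_mk continuous_subtype_val _⟩ with hι
  refine ⟨fun x => (f x).comp ι, ?_⟩
  intro x y
  have hup : ‖(f x).comp ι - (f y).comp ι‖ ≤ ‖f x - f y‖ := by
    rw [ContinuousMap.norm_le _ (norm_nonneg _)]
    intro k
    have he : ((f x).comp ι - (f y).comp ι) k = (f x - f y) (ι k) := by simp
    rw [he]
    exact ContinuousMap.norm_coe_le_norm _ _
  refine ⟨?_, hup.trans (hf x y).2⟩
  rcases eq_or_ne x y with rfl | hxy
  · simp
  set d := ‖x - y‖ with hdd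
  have hd0 : 0 < d := by
    rw [hdd]; exact norm_sub_pos_iff.mpr hxy
  have hεd : d*ε ≤ d*(1/25) := mul_le_mul_of_nonneg_left hε25 hd0.le
  have hAne : Nonempty ↥A := by
    by_contra hre
    have h0 : ‖f x - f y‖ ≤ 0 := by
      rw [ContinuousMap.norm_le _ le_rfl]
      intro k; exact absurd ⟨k⟩ hre
    have h1 := (hf x y).1
    have h2 : 0 < d/(1+ε) := by positivity
    rw [← hdd] at h1
    linarith
  set h0 : C(↥A, ℝ) := f x - f y with hh0
  set T : Set ↥A := {k | d*(1-8*ε) ≤ |h0 k|} with hTdef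
  -- Lipschitz helper
  have hLip : ∀ (s : ℝ), (s = 1 ∨ s = -1) → ∀ (k : ↥A) (w w' : ℓ1),
      s * f w k - s * f w' k ≤ ‖w - w'‖ := by
    intro s hs k w w'
    have h1 : |f w k - f w' k| ≤ ‖f w - f w'‖ := by
      have h2 := ContinuousMap.norm_coe_le_norm (f w - f w') k
      simpa [Real.norm_eq_abs] using h2
    have h3 := (hf w w').2
    have h4 : s * f w k - s * f w' k = s * (f w k - f w' k) := by ring
    have h5 : s * (f w k - f w' k) ≤ |f w k - f w' k| := by
      rcases hs with rfl | rfl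
      · rw [one_mul]; exact le_abs_self _
      · rw [neg_one_mul]; exact neg_le_abs _
    linarith
  -- The set of good witnesses is infinite.
  have hTinf : T.Infinite := by
    by_contra hfin'
    have hTfin : T.Finite := Set.not_infinite.mp hfin'
    set S : Finset ↥A := hTfin.toFinset with hS
    set colors : Finset (↥A × ℝ) := S ×ˢ ({1, -1} : Finset ℝ) with hcolors
    set M : ℕ := colors.card with hM
    set z : ℓ1 := x - y with hz
    have hev : ∀ᶠ i in Filter.cofinite, |(z : ℕ → ℝ) i| < ε*d :=
      (l1_summable z).tendsto_cofinite_zero.eventually (gt_mem_nhds (by positivity))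
    have hGinf : {i : ℕ | |(z : ℕ → ℝ) i| < ε*d}.Infinite := by
      apply Set.infinite_of_finite_compl
      rw [Set.compl_setOf]
      simpa [not_lt] using Filter.eventually_cofinite.mp hev
    obtain ⟨I, hIsub, hIcard⟩ := hGinf.exists_subset_card_eq (2^M + 1)
    -- for every admissible pair, a witness point and sign with the chain properties
    have hwithave : ∀ a b : ℕ, ∃ pr : ↥A × ℝ, a ∈ I → b ∈ I → a ≠ b →
        ((pr.2 = 1 ∨ pr.2 = -1) ∧
          (d - 8*(d*ε) ≤ pr.2 * f x pr.1 - pr.2 * f y pr.1) ∧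
          (d/2 - 8*(d*ε) ≤ pr.2 * f (x - lp.single 1 b (d/2)) pr.1 - pr.2 * f x pr.1) ∧
          (d/2 - 8*(d*ε) ≤ pr.2 * f y pr.1 - pr.2 * f (y - lp.single 1 a (d/2)) pr.1)) := by
      intro a b
      by_cases hvalid : a ∈ I ∧ b ∈ I ∧ a ≠ b
      · obtain ⟨haI, hbI, hab⟩ := hvalid
        have hza : |(z : ℕ → ℝ) a| < ε*d := hIsub haI
        have hzb : |(z : ℕ → ℝ) b| < ε*d := hIsub hbI
        set u : ℓ1 := x + (lp.single 1 a (d/2) - lp.single 1 b (d/2)) with hu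
        set v : ℓ1 := y - (lp.single 1 a (d/2) - lp.single 1 b (d/2)) with hv
        have hcoord : ∀ i, i ≠ a → i ≠ b →
            ((u - v : ℓ1) : ℕ → ℝ) i = (z : ℕ → ℝ) i := by
          intro i hia hib
          simp [hu, hv, hz, lp.coeFn_sub, lp.coeFn_add, single_coord, hia, hib]
        have hwa : ((u - v : ℓ1) : ℕ → ℝ) a = (z : ℕ → ℝ) a + d := by
          simp [hu, hv, hz, lp.coeFn_sub, lp.coeFn_add, single_coord, hab]
          try ring
        have hwb : ((u - v : ℓ1) : ℕ → ℝ) b = (z : ℕ → ℝ) b - d := by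
          have hba : b ≠ a := fun hcc => hab hcc.symm
          simp [hu, hv, hz, lp.coeFn_sub, lp.coeFn_add, single_coord, hba]
          try ring
        have hzn : ‖z‖ = d := by rw [hz, ← hdd]
        have hnorm_uv : 3*d - 4*(ε*d) ≤ ‖u - v‖ := by
          rw [l1_norm_split hab hcoord, hwa, hwb, hzn]
          have e1 : d - |(z : ℕ → ℝ) a| ≤ |(z : ℕ → ℝ) a + d| := by
            have f1 := le_abs_self ((z : ℕ → ℝ) a + d)
            have f2 := neg_abs_le ((z : ℕ → ℝ) a)
            linarith
          have e2 : d - |(z : ℕ → ℝ) b| ≤ |(z : ℕ → ℝ) b - d| := by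
            have f1 := le_abs_self (d - (z : ℕ → ℝ) b)
            have f2 := le_abs_self ((z : ℕ → ℝ) b)
            rw [abs_sub_comm] at f1
            linarith
          linarith
        have hbig : 3*d - 8*(d*ε) < ‖f u - f v‖ := by
          have h2 : (3*d - 4*(ε*d))/(1+ε) ≤ ‖u - v‖/(1+ε) := by
            gcongr
          have h3 : 3*d - 8*(d*ε) < (3*d - 4*(ε*d))/(1+ε) := by
            rw [lt_div_iff₀ honeε]
            nlinarith [mul_pos hd0 hε0, mul_pos (mul_pos hd0 hε0) hε0]
          linarith [(hf u v).1]
        have hex : ∃ k : ↥A, 3*d - 8*(d*ε) ≤ |f u k - f v k| := by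
          by_contra hnone
          push_neg at hnone
          have hle : ‖f u - f v‖ ≤ 3*d - 8*(d*ε) := by
            rw [ContinuousMap.norm_le _ (by linarith : (0:ℝ) ≤ 3*d - 8*(d*ε))]
            intro k
            have h5 := hnone k
            have h6 : (f u - f v) k = f u k - f v k := by simp
            rw [h6, Real.norm_eq_abs]
            linarith
          linarith
        obtain ⟨k, hk⟩ := hex
        have hgetchains : ∀ s : ℝ, (s = 1 ∨ s = -1) →
            (3*d - 8*(d*ε) ≤ s * f u k - s * f v k) →
            _ := fun s hs hw => chains hdd.symm hd0 hab (fun w => s * f w k)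
              (fun w w' => hLip s hs k w w') (by rw [← hu, ← hv]; exact hw)
        rcases le_or_gt 0 (f u k - f v k) with hsgn | hsgn
        · refine ⟨(k, 1), fun _ _ _ => ?_⟩
          have hw : 3*d - 8*(d*ε) ≤ (1:ℝ) * f u k - 1 * f v k := by
            rw [abs_of_nonneg hsgn] at hk; linarith
          obtain ⟨c1, c2, c3⟩ := hgetchains 1 (Or.inl rfl) hw
          exact ⟨Or.inl rfl, c1, c2, c3⟩
        · refine ⟨(k, -1), fun _ _ _ => ?_⟩
          have hw : 3*d - 8*(d*ε) ≤ (-1:ℝ) * f u k - (-1) * f v k := by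
            rw [abs_of_neg (by linarith : f u k - f v k < 0)] at hk; linarith
          obtain ⟨c1, c2, c3⟩ := hgetchains (-1) (Or.inr rfl) hw
          exact ⟨Or.inr rfl, c1, c2, c3⟩
      · exact ⟨(Classical.arbitrary _, 1), fun ha hb hab => absurd ⟨ha, hb, hab⟩ hvalid⟩
    choose wit hwit using hwithave
    -- each witness lies in T
    have hmemT : ∀ a b : ℕ, a ∈ I → b ∈ I → a ≠ b → (wit a b).1 ∈ S := by
      intro a b ha hb hab
      obtain ⟨hs, c1, -, -⟩ := hwit a b ha hb hab
      rw [hS, Set.Finite.mem_toFinset]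
      show d*(1-8*ε) ≤ |h0 (wit a b).1|
      have he : h0 (wit a b).1 = f x (wit a b).1 - f y (wit a b).1 := by simp [hh0]
      rw [he]
      rcases hs with h1 | h1 <;> rw [h1] at c1
      · have := le_abs_self (f x (wit a b).1 - f y (wit a b).1)
        nlinarith
      · have := neg_abs_le (f x (wit a b).1 - f y (wit a b).1)
        nlinarith
    -- pigeonhole on patterns
    have hmapsto : ∀ a ∈ I,
        (colors.filter (fun pr => ∃ b' ∈ I, b' ≠ a ∧ wit a b' = pr)) ∈ colors.powerset :=
      fun a _ => Finset.mem_powerset.mpr (Finset.filter_subset _ _)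
    have hcard : colors.powerset.card < I.card := by
      rw [Finset.card_powerset, hIcard, ← hM]; omega
    obtain ⟨a, haI, b, hbI, hab, hpe⟩ :=
      Finset.exists_ne_map_eq_of_card_lt_of_maps_to hcard hmapsto
    have hpa : wit a b ∈ colors.filter (fun pr => ∃ b' ∈ I, b' ≠ a ∧ wit a b' = pr) := by
      rw [Finset.mem_filter]
      refine ⟨?_, ⟨b, hbI, Ne.symm hab, rfl⟩⟩
      rw [hcolors, Finset.mem_product]
      refine ⟨hmemT a b haI hbI hab, ?_⟩
      rcases (hwit a b haI hbI hab).1 with h1 | h1 <;> simp [h1]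
    rw [hpe, Finset.mem_filter] at hpa
    obtain ⟨-, c, hcI, hcb, hwitc⟩ := hpa
    -- conflict
    obtain ⟨hs, c1, c2, -⟩ := hwit a b haI hbI hab
    obtain ⟨-, -, -, c3⟩ := hwit b c hbI hcI (Ne.symm hcb)
    rw [hwitc] at c3
    set pr := wit a b with hpr
    have hlip2 : pr.2 * f (x - lp.single 1 b (d/2)) pr.1
        - pr.2 * f (y - lp.single 1 b (d/2)) pr.1 ≤ d := by
      have h7 := hLip pr.2 hs pr.1 (x - lp.single 1 b (d/2)) (y - lp.single 1 b (d/2))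
      rwa [show (x - lp.single 1 b (d/2)) - (y - lp.single 1 b (d/2)) = x - y by abel,
        ← hdd] at h7
    linarith
  -- extract an accumulation point of the witnesses
  set T0 : Set K := Subtype.val '' T with hT0
  have hT0inf : T0.Infinite := hTinf.image Subtype.val_injective.injOn
  have hT0sub : T0 ⊆ A := Subtype.coe_image_subset _ _
  have hTcl : IsClosed T := isClosed_le continuous_const h0.continuous.abs
  have hT0cpt : IsCompact T0 := (hTcl.isCompact).image continuous_subtype_val
  haveI hnb : Filter.NeBot (Filter.cofinite ⊓ Filter.principal T0) :=
    Filter.cofinite_inf_principal_neBot_iff.mpr hT0inf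
  obtain ⟨kst, hkstT0, hclust⟩ := hT0cpt.exists_clusterPt (f := Filter.cofinite ⊓ Filter.principal T0) inf_le_right
  have hacc : AccPt kst (Filter.principal T0) := by
    rw [accPt_iff_clusterPt]
    apply hclust.mono
    apply inf_le_inf_right
    rw [Filter.le_principal_iff, Filter.mem_cofinite, compl_compl]
    exact Set.finite_singleton _
  have hder : kst ∈ derivedSet A := derivedSet_mono _ _ hT0sub (mem_derivedSet.mpr hacc)
  obtain ⟨kT, hkT, hkTval⟩ := hkstT0
  have hι2 : ι ⟨kst, hder⟩ = kT := Subtype.ext (by rw [hkTval]; rfl)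
  have hval : d*(1-8*ε) ≤ |h0 (ι ⟨kst, hder⟩)| := by rw [hι2]; exact hkT
  have hlow : d*(1-8*ε) ≤ ‖(f x).comp ι - (f y).comp ι‖ := by
    have he : ‖((f x).comp ι - (f y).comp ι) ⟨kst, hder⟩‖ = |h0 (ι ⟨kst, hder⟩)| := by
      simp [hh0, Real.norm_eq_abs]
    calc d*(1-8*ε) ≤ |h0 (ι ⟨kst, hder⟩)| := hval
      _ = ‖((f x).comp ι - (f y).comp ι) ⟨kst, hder⟩‖ := he.symm
      _ ≤ ‖(f x).comp ι - (f y).comp ι‖ := ContinuousMap.norm_coe_le_norm _ _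
  have harith : d/(1+δ) ≤ d*(1-8*ε) := by
    rw [div_le_iff₀ honeδ]
    nlinarith
  linarith


/-- If `K` is compact Hausdorff and `ℓ₁` embeds almost isometrically into `C(K)`, then for
every `n ∈ ℕ`, `ℓ₁` embeds almost isometrically into `C(K^(n))`. -/
theorem ell1_ai_embeds_C_iteratedDerivedSet
    (K : Type*) [TopologicalSpace K] [CompactSpace K] [T2Space K]
    (h : ∀ ε : ℝ, 0 < ε → ∃ f : lp (fun _ : ℕ => ℝ) 1 → C(K, ℝ),
      ∀ x y : lp (fun _ : ℕ => ℝ) 1,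
        ‖x - y‖ / (1 + ε) ≤ ‖f x - f y‖ ∧ ‖f x - f y‖ ≤ ‖x - y‖) :
    ∀ n : ℕ, ∀ ε : ℝ, 0 < ε →
      ∃ g : lp (fun _ : ℕ => ℝ) 1 → C(↥(iteratedDerivedSet K n), ℝ),
        ∀ x y : lp (fun _ : ℕ => ℝ) 1,
          ‖x - y‖ / (1 + ε) ≤ ‖g x - g y‖ ∧ ‖g x - g y‖ ≤ ‖x - y‖ := by
  intro n
  induction n with
  | zero =>
    intro ε hε
    obtain ⟨f, hf⟩ := h ε hε
    set ι0 : C(↥(iteratedDerivedSet K 0), K) := ⟨Subtype.val, continuous_subtype_val⟩ with hι0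
    refine ⟨fun x => (f x).comp ι0, ?_⟩
    intro x y
    have hnorm : ‖(f x).comp ι0 - (f y).comp ι0‖ = ‖f x - f y‖ := by
      apply le_antisymm
      · rw [ContinuousMap.norm_le _ (norm_nonneg _)]
        intro k
        have he : ((f x).comp ι0 - (f y).comp ι0) k = (f x - f y) k.1 := by simp [hι0]
        rw [he]; exact ContinuousMap.norm_coe_le_norm _ _
      · rw [ContinuousMap.norm_le _ (norm_nonneg _)]
        intro k
        have he : (f x - f y) k
            = ((f x).comp ι0 - (f y).comp ι0) ⟨k, Set.mem_univ k⟩ := by simp [hι0]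
        rw [he]; exact ContinuousMap.norm_coe_le_norm _ _
    rw [hnorm]; exact hf x y
  | succ n ih =>
    intro δ hδ
    obtain ⟨f, hf⟩ := ih (min (δ/(9*(1+δ))) (1/25)) (lt_min (by positivity) (by norm_num))
    haveI : CompactSpace ↥(derivedSet (iteratedDerivedSet K n)) :=
      iteratedDerivedSetCompact K (n+1)
    exact step_derived (isClosed_iteratedDerivedSet K n) hδ rfl f hf
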